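/- Let γ ∈ SL(2,ℤ) and k ≥ 1 with det(1 - γ^k) ≠ 0. Let g_γ be the automorphism of Q_k(γ) = coker(1 - γ^k) induced by multiplication by γ (one has g_γ^k = id). Then k times the number of orbits of the cyclic group ⟨g_γ⟩ acting on Q_k(γ) equals ∑_{d ∣ k} φ(k/d) · |tr(γ^d) - 2|, where φ is Euler's totient function and the sum is over positive divisors d of k. -/

import Mathlib

/-- `Q_k(γ) = coker(1 - γ^k)`, the cokernel of `1 - γ^k` acting on `Fin 2 → ℤ`. -/
abbrev Qk (γ : Matrix.SpecialLinearGroup (Fin 2) ℤ) (k : ℕ) :=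
  (Fin 2 → ℤ) ⧸ LinearMap.range (Matrix.toLin'
    (1 - ((γ ^ k : Matrix.SpecialLinearGroup (Fin 2) ℤ) : Matrix (Fin 2) (Fin 2) ℤ)))

section Aux

open Matrix LinearMap Submodule

variable {ι : Type*} [Fintype ι] [DecidableEq ι]

lemma cardQuot_key (N : Submodule ℤ (ι → ℤ)) (e : (ι → ℤ) ≃ₗ[ℤ] N) :
    Finite ((ι → ℤ) ⧸ N) ∧
      Nat.card ((ι → ℤ) ⧸ N) =
        (LinearMap.det (N.subtype ∘ₗ (e : (ι → ℤ) →ₗ[ℤ] N))).natAbs := by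
  obtain ⟨n, snf⟩ := N.smithNormalForm (Pi.basisFun ℤ ι)
  have hn : n = Fintype.card ι := by
    have h1 : Module.finrank ℤ N = n :=
      (Module.finrank_eq_card_basis snf.bN).trans (Fintype.card_fin n)
    have h2 : Module.finrank ℤ N = Fintype.card ι := by
      rw [← e.finrank_eq, Module.finrank_pi]
    rw [← h1, h2]
  subst hn
  set fe : Fin (Fintype.card ι) ≃ ι := Equiv.ofBijective snf.f
    ((Fintype.bijective_iff_injective_and_card snf.f).mpr
      ⟨snf.f.injective, Fintype.card_fin _⟩) with hfe_def
  have hfe : ∀ j, snf.f j = fe j := fun _ => rfl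
  set a : ι → ℤ := fun i => snf.a (fe.symm i) with ha
  have hrepr : ∀ (m : ι → ℤ) (hm : m ∈ N) i,
      snf.bM.repr m i = a i * snf.bN.repr ⟨m, hm⟩ (fe.symm i) := by
    intro m hm i
    have h1 := snf.repr_apply_embedding_eq_repr_smul (m := ⟨m, hm⟩) (i := fe.symm i)
    have h2 : snf.f (fe.symm i) = i := by rw [hfe]; exact fe.apply_symm_apply i
    rw [h2] at h1
    rw [h1, _root_.map_smul]
    simp [ha]
  have ha0 : ∀ i, a i ≠ 0 := by
    intro i h0
    apply snf.bN.ne_zero (fe.symm i)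
    apply Subtype.coe_injective
    show ((snf.bN (fe.symm i) : ι → ℤ)) = ((0 : N) : ι → ℤ)
    rw [snf.snf (fe.symm i)]
    have h0' : snf.a (fe.symm i) = 0 := h0
    simp [h0']
  have hmem : ∀ x, x ∈ N ↔ ∀ i, a i ∣ snf.bM.repr x i := by
    intro x
    constructor
    · intro hx i
      exact ⟨snf.bN.repr ⟨x, hx⟩ (fe.symm i), hrepr x hx i⟩
    · intro h
      choose c hc using h
      have hx : x = ∑ j : Fin (Fintype.card ι), c (fe j) • (snf.bN j : ι → ℤ) := by
        have hb := snf.bM.sum_repr x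
        calc x = ∑ i, snf.bM.repr x i • snf.bM i := hb.symm
          _ = ∑ i, c i • (a i • snf.bM i) := by
              refine Finset.sum_congr rfl fun i _ => ?_
              rw [hc i, mul_comm, mul_smul]
          _ = ∑ j : Fin (Fintype.card ι), c (fe j) • (a (fe j) • snf.bM (fe j)) := by
              rw [← Equiv.sum_comp fe]
          _ = ∑ j : Fin (Fintype.card ι), c (fe j) • (snf.bN j : ι → ℤ) := by
              refine Finset.sum_congr rfl fun j _ => ?_
              congr 1
              rw [snf.snf j, hfe j]
              simp [ha]
      rw [hx]
      exact Submodule.sum_mem N fun j _ => Submodule.smul_mem N _ (snf.bN j).2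
  let F : (ι → ℤ) →ₗ[ℤ] ∀ i, ℤ ⧸ Ideal.span ({a i} : Set ℤ) :=
    LinearMap.pi fun i => (Ideal.span ({a i} : Set ℤ)).mkQ ∘ₗ (snf.bM.coord i)
  have hFx : ∀ (x : ι → ℤ) i, F x i = Submodule.Quotient.mk (snf.bM.repr x i) :=
    fun x i => rfl
  have hker : LinearMap.ker F = N := by
    ext x
    rw [LinearMap.mem_ker, hmem x, funext_iff]
    refine forall_congr' fun i => ?_
    rw [hFx, show (0 : ∀ i, ℤ ⧸ Ideal.span ({a i} : Set ℤ)) i = 0 from rfl,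
      Submodule.Quotient.mk_eq_zero, Ideal.mem_span_singleton]
  have hsurj : Function.Surjective F := by
    intro y
    choose z hz using fun i => Submodule.Quotient.mk_surjective _ (y i)
    refine ⟨∑ i, z i • snf.bM i, ?_⟩
    funext i
    rw [hFx, snf.bM.repr_sum_self]
    exact hz i
  let E : ((ι → ℤ) ⧸ N) ≃ₗ[ℤ] ∀ i, ℤ ⧸ Ideal.span ({a i} : Set ℤ) :=
    (Submodule.quotEquivOfEq N (LinearMap.ker F) hker.symm).trans
      (F.quotKerEquivOfSurjective hsurj)
  haveI : ∀ i, NeZero (a i).natAbs := fun i => ⟨Int.natAbs_ne_zero.mpr (ha0 i)⟩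
  haveI : ∀ i, Finite (ℤ ⧸ Ideal.span ({a i} : Set ℤ)) := fun i =>
    Finite.of_equiv _ (Int.quotientSpanEquivZMod (a i)).toEquiv.symm
  have hfin : Finite ((ι → ℤ) ⧸ N) := Finite.of_equiv _ E.toEquiv.symm
  refine ⟨hfin, ?_⟩
  have hcard : Nat.card ((ι → ℤ) ⧸ N) = ∏ i, (a i).natAbs := by
    rw [Nat.card_congr E.toEquiv, Nat.card_pi]
    exact Finset.prod_congr rfl fun i _ => by
      rw [Nat.card_congr (Int.quotientSpanEquivZMod (a i)).toEquiv, Nat.card_zmod]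
  let e₂ : (ι → ℤ) ≃ₗ[ℤ] N := snf.bM.equiv (snf.bN.reindex fe) (Equiv.refl ι)
  have hdet : (LinearMap.det (N.subtype ∘ₗ (e : (ι → ℤ) →ₗ[ℤ] N))).natAbs =
      (LinearMap.det (N.subtype ∘ₗ (e₂ : (ι → ℤ) →ₗ[ℤ] N))).natAbs :=
    Int.natAbs_eq_iff_associated.mpr (LinearMap.associated_det_comp_equiv _ _ _)
  have hmat : LinearMap.toMatrix snf.bM snf.bM (N.subtype ∘ₗ (e₂ : (ι → ℤ) →ₗ[ℤ] N)) =
      Matrix.diagonal a := by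
    ext i j
    rw [LinearMap.toMatrix_apply]
    have h1 : (N.subtype ∘ₗ (e₂ : (ι → ℤ) →ₗ[ℤ] N)) (snf.bM j) = a j • snf.bM j := by
      simp only [LinearMap.comp_apply, Submodule.subtype_apply]
      have h2 : ((e₂ : (ι → ℤ) →ₗ[ℤ] N) (snf.bM j) : ι → ℤ) =
          ((snf.bN.reindex fe) j : ι → ℤ) := by
        simp [e₂, Module.Basis.equiv_apply]
      rw [h2, Module.Basis.reindex_apply, snf.snf, hfe, fe.apply_symm_apply]
    rw [h1, _root_.map_smul, Module.Basis.repr_self, Finsupp.smul_single, smul_eq_mul, mul_one]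
    by_cases h : i = j
    · subst h; rw [Matrix.diagonal_apply_eq, Finsupp.single_eq_same]
    · rw [Matrix.diagonal_apply_ne _ h, Finsupp.single_eq_of_ne h]
  rw [hdet, ← LinearMap.det_toMatrix snf.bM (N.subtype ∘ₗ (e₂ : (ι → ℤ) →ₗ[ℤ] N)), hmat,
    Matrix.det_diagonal, hcard]
  rw [show ((∏ i, a i).natAbs) = ∏ i, (a i).natAbs from
    (map_prod Int.natAbsHom a Finset.univ)]

lemma toLin'_injective_of_det_ne_zero {A : Matrix ι ι ℤ} (hA : A.det ≠ 0) :
    Function.Injective (Matrix.toLin' A) := by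
  intro v w h
  rw [Matrix.toLin'_apply, Matrix.toLin'_apply] at h
  have h2 : A.det • v = A.det • w := by
    calc A.det • v = (A.det • (1 : Matrix ι ι ℤ)) *ᵥ v := by
          rw [Matrix.smul_mulVec, Matrix.one_mulVec]
      _ = A.adjugate *ᵥ (A *ᵥ v) := by rw [Matrix.mulVec_mulVec, Matrix.adjugate_mul]
      _ = A.adjugate *ᵥ (A *ᵥ w) := by rw [h]
      _ = (A.det • (1 : Matrix ι ι ℤ)) *ᵥ w := by rw [Matrix.mulVec_mulVec, Matrix.adjugate_mul]
      _ = A.det • w := by rw [Matrix.smul_mulVec, Matrix.one_mulVec]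
  funext i
  have := congrFun h2 i
  simp only [Pi.smul_apply, smul_eq_mul] at this
  exact mul_left_cancel₀ hA this

lemma card_coker (A : Matrix ι ι ℤ) (hA : A.det ≠ 0) :
    Finite ((ι → ℤ) ⧸ LinearMap.range (Matrix.toLin' A)) ∧
      Nat.card ((ι → ℤ) ⧸ LinearMap.range (Matrix.toLin' A)) = A.det.natAbs := by
  have hinj := toLin'_injective_of_det_ne_zero hA
  let e := LinearEquiv.ofInjective (Matrix.toLin' A) hinj
  have hcomp : (LinearMap.range (Matrix.toLin' A)).subtype ∘ₗ
      (e : (ι → ℤ) →ₗ[ℤ] LinearMap.range (Matrix.toLin' A)) = Matrix.toLin' A := by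
    ext v
    simp [e]
  obtain ⟨h1, h2⟩ := cardQuot_key _ e
  exact ⟨h1, by rw [h2, hcomp, LinearMap.det_toLin']⟩

open Function MulAction

lemma burnside_aux {X : Type*} [Finite X] {k : ℕ} (hk : 1 ≤ k) (f : X → X)
    (hfk : f^[k] = id) :
    k * Nat.card (Quot fun x y : X => ∃ j : ℕ, f^[j] x = y) =
      ∑ j ∈ Finset.range k, Nat.card {x : X // f^[j] x = x} := by
  haveI : NeZero k := ⟨by omega⟩
  have hmod : ∀ m, f^[m] = f^[m % k] := by
    intro m
    conv_lhs => rw [← Nat.div_add_mod m k]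
    rw [Function.iterate_add, Function.iterate_mul, hfk, Function.iterate_id, Function.id_comp]
  letI : SMul (Multiplicative (ZMod k)) X := ⟨fun a x => f^[(Multiplicative.toAdd a).val] x⟩
  have hsmul : ∀ (a : Multiplicative (ZMod k)) (x : X),
      a • x = f^[(Multiplicative.toAdd a).val] x := fun _ _ => rfl
  letI : MulAction (Multiplicative (ZMod k)) X :=
    { one_smul := fun x => by
        rw [hsmul]
        have h1 : (Multiplicative.toAdd (1 : Multiplicative (ZMod k))).val = 0 := by
          simp [ZMod.val_zero]
        rw [h1]; rfl
      mul_smul := fun a b x => by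
        rw [hsmul, hsmul, hsmul]
        have : (Multiplicative.toAdd (a * b)).val =
            ((Multiplicative.toAdd a).val + (Multiplicative.toAdd b).val) % k := by
          rw [toAdd_mul, ZMod.val_add]
        rw [this, ← hmod, Function.iterate_add_apply] }
  -- relation between orbit relation and our relation
  have hiff : ∀ x y : X, (x ∈ orbit (Multiplicative (ZMod k)) y) ↔ ∃ j : ℕ, f^[j] x = y := by
    intro x y
    constructor
    · rintro ⟨c, rfl⟩
      show ∃ j, f^[j] (c • y) = y
      rw [hsmul]
      refine ⟨(k - 1) * (Multiplicative.toAdd c).val, ?_⟩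
      rw [← Function.iterate_add_apply]
      have : (k - 1) * (Multiplicative.toAdd c).val + (Multiplicative.toAdd c).val =
          k * (Multiplicative.toAdd c).val := by
        obtain ⟨n, rfl⟩ : ∃ n, k = n + 1 := ⟨k - 1, by omega⟩
        simp [Nat.add_sub_cancel, Nat.succ_mul]
      rw [this, Function.iterate_mul, hfk, Function.iterate_id]
      rfl
    · rintro ⟨j, rfl⟩
      refine ⟨Multiplicative.ofAdd (-(j : ZMod k)), ?_⟩
      show Multiplicative.ofAdd (-(j : ZMod k)) • f^[j] x = x
      rw [hsmul, toAdd_ofAdd, ← Function.iterate_add_apply]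
      have hdvd : k ∣ (-(j : ZMod k)).val + j := by
        rw [← ZMod.natCast_eq_zero_iff, Nat.cast_add, ZMod.natCast_val, ZMod.cast_id]
        simp
      obtain ⟨c, hc⟩ := hdvd
      rw [hmod ((-(j : ZMod k)).val + j), hc, Nat.mul_mod_right]
      rfl
  letI : Fintype X := Fintype.ofFinite X
  letI : ∀ a : Multiplicative (ZMod k), Fintype (MulAction.fixedBy X a) :=
    fun _ => Fintype.ofFinite _
  letI : Fintype (Quotient (orbitRel (Multiplicative (ZMod k)) X)) := Fintype.ofFinite _
  have hb := MulAction.sum_card_fixedBy_eq_card_orbits_mul_card_group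
    (Multiplicative (ZMod k)) X
  have hcg : Fintype.card (Multiplicative (ZMod k)) = k := by
    rw [Fintype.card_multiplicative, ZMod.card]
  have hΩ : Fintype.card (Quotient (orbitRel (Multiplicative (ZMod k)) X)) =
      Nat.card (Quot fun x y : X => ∃ j : ℕ, f^[j] x = y) := by
    rw [← Nat.card_eq_fintype_card]
    exact Nat.card_congr (Quot.congr (Equiv.refl X) (fun a b => hiff a b))
  have hsum : (∑ a : Multiplicative (ZMod k), Fintype.card (MulAction.fixedBy X a)) =
      ∑ j ∈ Finset.range k, Nat.card {x : X // f^[j] x = x} := by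
    refine Finset.sum_bij (fun a _ => (Multiplicative.toAdd a).val) ?_ ?_ ?_ ?_
    · exact fun a _ => Finset.mem_range.mpr (ZMod.val_lt _)
    · intro a _ b _ h
      exact Multiplicative.toAdd.injective (ZMod.val_injective k h)
    · intro b hb
      refine ⟨Multiplicative.ofAdd ((b : ℕ) : ZMod k), Finset.mem_univ _, ?_⟩
      simp [ZMod.val_cast_of_lt (Finset.mem_range.mp hb)]
    · intro a _
      rw [← Nat.card_eq_fintype_card]
      exact Nat.card_congr (Equiv.subtypeEquivRight fun x => Iff.rfl)
  rw [← hsum, hb, hcg, hΩ]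
  exact Nat.mul_comm _ _

lemma gcd_sum_aux {k : ℕ} (hk : 1 ≤ k) (F : ℕ → ℕ) :
    ∑ j ∈ Finset.range k, F (Nat.gcd k j) =
      ∑ d ∈ Nat.divisors k, Nat.totient (k / d) * F d := by
  rw [← Finset.sum_fiberwise_of_maps_to (g := fun j => Nat.gcd k j) (t := Nat.divisors k)
    (fun j _ => Nat.mem_divisors.mpr ⟨Nat.gcd_dvd_left k j, by omega⟩)]
  refine Finset.sum_congr rfl fun d hd => ?_
  have h1 : ∀ j ∈ Finset.filter (fun j => Nat.gcd k j = d) (Finset.range k),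
      F (Nat.gcd k j) = F d := fun j hj => by rw [(Finset.mem_filter.mp hj).2]
  rw [Finset.sum_congr rfl h1, Finset.sum_const, smul_eq_mul,
    ← Nat.totient_div_of_dvd (Nat.mem_divisors.mp hd).1]


lemma pow_mk_eq (γ : Matrix.SpecialLinearGroup (Fin 2) ℤ) (k : ℕ)
    (g : Module.End ℤ (Qk γ k))
    (hg : ∀ v : Fin 2 → ℤ, g (Submodule.Quotient.mk v) =
      Submodule.Quotient.mk (Matrix.mulVec ((γ : Matrix (Fin 2) (Fin 2) ℤ)) v))
    (j : ℕ) (v : Fin 2 → ℤ) :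
    (g ^ j) (Submodule.Quotient.mk v) =
      Submodule.Quotient.mk (((γ : Matrix (Fin 2) (Fin 2) ℤ)) ^ j *ᵥ v) := by
  induction j generalizing v with
  | zero => simp [Matrix.one_mulVec]
  | succ n ih =>
      rw [pow_succ, Module.End.mul_apply, hg, ih, Matrix.mulVec_mulVec, ← pow_succ]

lemma fix_card (γ : Matrix.SpecialLinearGroup (Fin 2) ℤ) (k : ℕ) (hk : 1 ≤ k)
    (hdet : (1 - ((γ ^ k : Matrix.SpecialLinearGroup (Fin 2) ℤ) :
        Matrix (Fin 2) (Fin 2) ℤ)).det ≠ 0)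
    (g : Module.End ℤ (Qk γ k))
    (hg : ∀ v : Fin 2 → ℤ, g (Submodule.Quotient.mk v) =
      Submodule.Quotient.mk (Matrix.mulVec ((γ : Matrix (Fin 2) (Fin 2) ℤ)) v))
    (d : ℕ) (hd : d ∣ k) :
    Nat.card {x : Qk γ k // (g ^ d) x = x} =
      ((1 - ((γ : Matrix (Fin 2) (Fin 2) ℤ)) ^ d).det).natAbs := by
  set A : Matrix (Fin 2) (Fin 2) ℤ := (γ : Matrix (Fin 2) (Fin 2) ℤ) with hA
  have hcoe : ((γ ^ k : Matrix.SpecialLinearGroup (Fin 2) ℤ) :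
      Matrix (Fin 2) (Fin 2) ℤ) = A ^ k := Matrix.SpecialLinearGroup.coe_pow γ k
  set Mk : Matrix (Fin 2) (Fin 2) ℤ := 1 - ((γ ^ k : Matrix.SpecialLinearGroup (Fin 2) ℤ) :
      Matrix (Fin 2) (Fin 2) ℤ) with hMkdef
  set Nd : Matrix (Fin 2) (Fin 2) ℤ := 1 - A ^ d with hNd
  set Cd : Matrix (Fin 2) (Fin 2) ℤ := ∑ i ∈ Finset.range (k / d), (A ^ d) ^ i with hCd
  have hMk : Mk = Cd * Nd := by
    have h1 : Cd * (A ^ d - 1) = (A ^ d) ^ (k / d) - 1 := geom_sum_mul (A ^ d) (k / d)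
    have h2 : (A ^ d) ^ (k / d) = A ^ k := by
      rw [← pow_mul, Nat.mul_div_cancel' hd]
    rw [hMkdef, hcoe, hNd]
    have := congrArg Neg.neg h1
    rw [neg_sub] at this
    rw [← h2, ← this, mul_sub, mul_one, mul_sub, mul_one, neg_sub]
  have hMk' : Mk = Nd * Cd := by
    have h1 : (A ^ d - 1) * Cd = (A ^ d) ^ (k / d) - 1 := mul_geom_sum (A ^ d) (k / d)
    have h2 : (A ^ d) ^ (k / d) = A ^ k := by
      rw [← pow_mul, Nat.mul_div_cancel' hd]
    rw [hMkdef, hcoe, hNd]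
    have := congrArg Neg.neg h1
    rw [neg_sub] at this
    rw [← h2, ← this, sub_mul, one_mul, sub_mul, one_mul, neg_sub]
  have hdetN : Nd.det ≠ 0 := by
    intro h0
    apply hdet
    rw [hMk, Matrix.det_mul, h0, mul_zero]
  have hdetC : Cd.det ≠ 0 := by
    intro h0
    apply hdet
    rw [hMk, Matrix.det_mul, h0, zero_mul]
  have hinjN := toLin'_injective_of_det_ne_zero hdetN
  have hinjC := toLin'_injective_of_det_ne_zero hdetC
  set pM : Submodule ℤ (Fin 2 → ℤ) := LinearMap.range (Matrix.toLin' Mk) with hpM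
  set pN : Submodule ℤ (Fin 2 → ℤ) := LinearMap.range (Matrix.toLin' Nd) with hpN
  have hker : pN ≤ LinearMap.ker (pM.mkQ ∘ₗ Matrix.toLin' Cd) := by
    rintro _ ⟨w, rfl⟩
    rw [LinearMap.mem_ker, LinearMap.comp_apply, Matrix.toLin'_apply, Matrix.toLin'_apply,
      Submodule.mkQ_apply, Submodule.Quotient.mk_eq_zero, Matrix.mulVec_mulVec, ← hMk]
    exact ⟨w, Matrix.toLin'_apply Mk w⟩
  set ψ : ((Fin 2 → ℤ) ⧸ pN) →ₗ[ℤ] ((Fin 2 → ℤ) ⧸ pM) := pN.liftQ _ hker with hψdef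
  have hψ : ∀ v, ψ (Submodule.Quotient.mk v) = Submodule.Quotient.mk (Cd *ᵥ v) := by
    intro v
    rw [hψdef, Submodule.liftQ_apply, LinearMap.comp_apply, Matrix.toLin'_apply,
      Submodule.mkQ_apply]
  have hinjψ : Function.Injective ψ := by
    rw [← LinearMap.ker_eq_bot, Submodule.eq_bot_iff]
    intro x hx
    obtain ⟨v, rfl⟩ := Submodule.Quotient.mk_surjective _ x
    rw [LinearMap.mem_ker, hψ, Submodule.Quotient.mk_eq_zero] at hx
    obtain ⟨w, hw⟩ := hx
    rw [Matrix.toLin'_apply] at hw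
    have h2 : Matrix.toLin' Cd (Nd *ᵥ w) = Matrix.toLin' Cd v := by
      rw [Matrix.toLin'_apply, Matrix.toLin'_apply, Matrix.mulVec_mulVec, ← hMk, hw]
    have h3 : v = Nd *ᵥ w := (hinjC h2).symm
    rw [Submodule.Quotient.mk_eq_zero]
    exact ⟨w, by rw [Matrix.toLin'_apply, ← h3]⟩
  have hrange : ∀ x : Qk γ k, x ∈ LinearMap.range ψ ↔ (g ^ d) x = x := by
    intro x
    constructor
    · rintro ⟨y, rfl⟩
      obtain ⟨u, rfl⟩ := Submodule.Quotient.mk_surjective _ y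
      rw [hψ, pow_mk_eq γ k g hg d, Submodule.Quotient.eq]
      refine ⟨-u, ?_⟩
      have hsplit : Mk = Cd - A ^ d * Cd := by rw [hMk', hNd, sub_mul, one_mul]
      rw [Matrix.toLin'_apply, ← hMkdef, Matrix.mulVec_neg, hsplit, Matrix.sub_mulVec,
        neg_sub, Matrix.mulVec_mulVec]
    · intro hfix
      obtain ⟨v, rfl⟩ := Submodule.Quotient.mk_surjective _ x
      rw [pow_mk_eq γ k g hg d, Submodule.Quotient.eq] at hfix
      obtain ⟨w, hw⟩ := hfix
      rw [Matrix.toLin'_apply] at hw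
      have h1 : Matrix.toLin' Nd (Cd *ᵥ (-w)) = Matrix.toLin' Nd v := by
        rw [Matrix.toLin'_apply, Matrix.toLin'_apply, Matrix.mulVec_mulVec, ← hMk',
          Matrix.mulVec_neg, hw, hNd, Matrix.sub_mulVec, Matrix.one_mulVec, neg_sub]
      refine ⟨Submodule.Quotient.mk (-w), ?_⟩
      rw [hψ, hinjN h1]
  have e1 := LinearEquiv.ofInjective ψ hinjψ
  have e2 : {x : Qk γ k // (g ^ d) x = x} ≃
      {x : (Fin 2 → ℤ) ⧸ pM // x ∈ LinearMap.range ψ} :=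
    Equiv.subtypeEquivRight fun x => (hrange x).symm
  calc Nat.card {x : Qk γ k // (g ^ d) x = x}
      = Nat.card {x : (Fin 2 → ℤ) ⧸ pM // x ∈ LinearMap.range ψ} := Nat.card_congr e2
    _ = Nat.card ((Fin 2 → ℤ) ⧸ pN) := (Nat.card_congr e1.toEquiv).symm
    _ = Nd.det.natAbs := (card_coker Nd hdetN).2


end Aux

lemma iterate_gcd_fixed {X : Type*} (f : X → X) (x : X) (a b : ℕ)
    (ha : f^[a] x = x) (hb : f^[b] x = x) : f^[Nat.gcd a b] x = x := by
  induction a, b using Nat.gcd.induction with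
  | H0 n => simpa using hb
  | H1 m n hm ih =>
      rw [Nat.gcd_rec]
      have h1 : f^[m * (n / m)] x = x := by
        rw [Function.iterate_mul]
        exact Function.iterate_fixed ha _
      have h3 : f^[n] x = f^[n % m] x := by
        conv_lhs => rw [← Nat.mod_add_div n m]
        rw [Function.iterate_add_apply, h1]
      exact ih (h3.symm.trans hb) ha

/-- if `det(1 - γ^k) ≠ 0` and `g` is the endomorphism of `Q_k(γ)` induced by
multiplication by `γ`, then `k` times the number of orbits of `⟨g⟩` on `Q_k(γ)` equals
`∑_{d ∣ k} φ(k/d) · |tr(γ^d) - 2|`. -/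
theorem stmt7 (γ : Matrix.SpecialLinearGroup (Fin 2) ℤ) (k : ℕ) (hk : 1 ≤ k)
    (hdet : (1 - ((γ ^ k : Matrix.SpecialLinearGroup (Fin 2) ℤ) :
        Matrix (Fin 2) (Fin 2) ℤ)).det ≠ 0)
    (g : Module.End ℤ (Qk γ k))
    (hg : ∀ v : Fin 2 → ℤ, g (Submodule.Quotient.mk v) =
      Submodule.Quotient.mk (Matrix.mulVec
        ((γ : Matrix (Fin 2) (Fin 2) ℤ)) v)) :
    k * Nat.card (Quot fun x y : Qk γ k => ∃ j : ℕ, (g ^ j) x = y) =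
      ∑ d ∈ Nat.divisors k, Nat.totient (k / d) *
        (Matrix.trace ((γ ^ d : Matrix.SpecialLinearGroup (Fin 2) ℤ) :
          Matrix (Fin 2) (Fin 2) ℤ) - 2).natAbs := by
  classical
  have hfin : Finite (Qk γ k) := (card_coker _ hdet).1
  have hfk : (⇑g)^[k] = id := by
    funext x
    obtain ⟨v, rfl⟩ := Submodule.Quotient.mk_surjective _ x
    have h1 : (⇑g)^[k] (Submodule.Quotient.mk v) = (g ^ k) (Submodule.Quotient.mk v) :=
      (Module.End.pow_apply g k _).symm
    rw [id_eq, h1, pow_mk_eq γ k g hg k, Submodule.Quotient.eq]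
    refine ⟨-v, ?_⟩
    rw [Matrix.toLin'_apply, Matrix.mulVec_neg, Matrix.sub_mulVec, Matrix.one_mulVec,
      neg_sub, Matrix.SpecialLinearGroup.coe_pow]
  have hfix_iff : ∀ (j : ℕ) (x : Qk γ k), (⇑g)^[j] x = x ↔ (⇑g)^[Nat.gcd k j] x = x := by
    intro j x
    constructor
    · intro hj
      exact iterate_gcd_fixed (⇑g) x k j (by rw [hfk]; rfl) hj
    · intro hgcd
      obtain ⟨c, hc⟩ := Nat.gcd_dvd_right k j
      rw [hc, Function.iterate_mul]
      exact Function.iterate_fixed hgcd c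
  have hrel : (fun x y : Qk γ k => ∃ j : ℕ, (g ^ j) x = y) =
      (fun x y : Qk γ k => ∃ j : ℕ, (⇑g)^[j] x = y) := by
    funext x y
    simp only [Module.End.pow_apply]
  have h2 : ∑ j ∈ Finset.range k, Nat.card {x : Qk γ k // (⇑g)^[j] x = x} =
      ∑ d ∈ Nat.divisors k, Nat.totient (k / d) *
        Nat.card {x : Qk γ k // (⇑g)^[d] x = x} := by
    rw [← gcd_sum_aux hk (fun d => Nat.card {x : Qk γ k // (⇑g)^[d] x = x})]
    refine Finset.sum_congr rfl fun j _ => ?_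
    exact Nat.card_congr (Equiv.subtypeEquivRight fun x => hfix_iff j x)
  rw [hrel, burnside_aux hk (⇑g) hfk, h2]
  refine Finset.sum_congr rfl fun d hd => ?_
  obtain ⟨hdd, hk0⟩ := Nat.mem_divisors.mp hd
  congr 1
  have h3 : Nat.card {x : Qk γ k // (⇑g)^[d] x = x} =
      Nat.card {x : Qk γ k // (g ^ d) x = x} :=
    Nat.card_congr (Equiv.subtypeEquivRight fun x => by rw [Module.End.pow_apply])
  rw [h3, fix_card γ k hk hdet g hg d hdd, Matrix.SpecialLinearGroup.coe_pow]
  have hdet1 : ((γ : Matrix (Fin 2) (Fin 2) ℤ) ^ d).det = 1 := by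
    rw [← Matrix.SpecialLinearGroup.coe_pow]
    exact Matrix.SpecialLinearGroup.det_coe (γ ^ d)
  have hdet2 : (1 - (γ : Matrix (Fin 2) (Fin 2) ℤ) ^ d).det =
      2 - Matrix.trace ((γ : Matrix (Fin 2) (Fin 2) ℤ) ^ d) := by
    rw [Matrix.det_fin_two] at hdet1 ⊢
    rw [Matrix.trace_fin_two]
    simp only [Matrix.sub_apply, Matrix.one_apply_eq, Matrix.one_apply_ne,
      (by decide : (0 : Fin 2) ≠ 1), (by decide : (1 : Fin 2) ≠ 0), Ne, not_false_iff,
      zero_sub]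
    linear_combination hdet1
  rw [hdet2, show (2 - Matrix.trace ((γ : Matrix (Fin 2) (Fin 2) ℤ) ^ d)) =
    -(Matrix.trace ((γ : Matrix (Fin 2) (Fin 2) ℤ) ^ d) - 2) by ring, Int.natAbs_neg]
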